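/- Let m ≥ 3, let C_m be the cycle graph on m vertices, and let J₀ be a subset of the vertices of C_m such that the complement of J₀ contains two adjacent vertices. Then there exists a subset J₀' of the vertices of the path graph P_m on m vertices such that the lattice Λ*(C_m, J₀) is order-isomorphic to the lattice Λ*(P_m, J₀'). -/

import Mathlib

open SimpleGraph Finset

/-- `ReachIn G U a b` : `b` is reachable from `a` within the subgraph of `G`
induced on the vertex set `U`. -/
def ReachIn {n : ℕ} (G : SimpleGraph (Fin n)) (U : Finset (Fin n)) (a b : Fin n) : Prop :=
  Relation.ReflTransGen (fun x y => G.Adj x y ∧ x ∈ U ∧ y ∈ U) a b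

/-- `U` is admissible (with respect to `J₀`) if no connected component of the
subgraph of `G` induced on `U` is entirely contained in `J₀`: every component
contains a vertex outside `J₀`. -/
def Admissible {n : ℕ} (G : SimpleGraph (Fin n)) (J₀ U : Finset (Fin n)) : Prop :=
  ∀ a ∈ U, ∃ b, ReachIn G U a b ∧ b ∉ J₀

/-- A subset `A` is connected if the induced subgraph on `A` is connected. -/
def ConnIn {n : ℕ} (G : SimpleGraph (Fin n)) (A : Finset (Fin n)) : Prop :=
  ∀ a ∈ A, ∀ b ∈ A, ReachIn G A a b

theorem ReachIn.mono {n : ℕ} {G : SimpleGraph (Fin n)} {U V : Finset (Fin n)} (h : U ⊆ V)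
    {a b : Fin n} (hr : ReachIn G U a b) : ReachIn G V a b := by
  unfold ReachIn at hr ⊢
  induction hr with
  | refl => exact Relation.ReflTransGen.refl
  | tail _ hxy ih => exact ih.tail ⟨hxy.1, h hxy.2.1, h hxy.2.2⟩

theorem admissible_empty {n : ℕ} (G : SimpleGraph (Fin n)) (J₀ : Finset (Fin n)) :
    Admissible G J₀ ∅ := fun a ha => absurd ha (Finset.notMem_empty a)

theorem admissible_union {n : ℕ} {G : SimpleGraph (Fin n)} {J₀ U V : Finset (Fin n)}
    (hU : Admissible G J₀ U) (hV : Admissible G J₀ V) : Admissible G J₀ (U ∪ V) := by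
  intro a ha
  rcases Finset.mem_union.mp ha with h | h
  · obtain ⟨b, hb, hbJ⟩ := hU a h
    exact ⟨b, hb.mono Finset.subset_union_left, hbJ⟩
  · obtain ⟨b, hb, hbJ⟩ := hV a h
    exact ⟨b, hb.mono Finset.subset_union_right, hbJ⟩

/-- `Λ*(G, J₀)` : the poset of admissible subsets, ordered by inclusion. -/
def CrossSection {n : ℕ} (G : SimpleGraph (Fin n)) (J₀ : Finset (Fin n)) : Type :=
  {U : Finset (Fin n) // Admissible G J₀ U}

namespace CrossSection

variable {n : ℕ} {G : SimpleGraph (Fin n)} {J₀ : Finset (Fin n)}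

instance : PartialOrder (CrossSection G J₀) :=
  inferInstanceAs (PartialOrder {U : Finset (Fin n) // Admissible G J₀ U})

instance : DecidableEq (CrossSection G J₀) :=
  inferInstanceAs (DecidableEq {U : Finset (Fin n) // Admissible G J₀ U})

noncomputable instance : Fintype (CrossSection G J₀) :=
  Fintype.ofInjective (Subtype.val : CrossSection G J₀ → Finset (Fin n)) Subtype.val_injective

open Classical in
/-- The underlying set of the meet of two admissible sets: the largest admissible
subset contained in the intersection. -/
noncomputable def meetFinset (G : SimpleGraph (Fin n)) (J₀ : Finset (Fin n))
    (U V : Finset (Fin n)) : Finset (Fin n) :=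
  ((U ∩ V).powerset.filter (fun W => Admissible G J₀ W)).sup id

theorem admissible_sup {s : Finset (Finset (Fin n))}
    (h : ∀ W ∈ s, Admissible G J₀ W) : Admissible G J₀ (s.sup id) :=
  Finset.sup_induction (by simpa using admissible_empty G J₀)
    (fun a ha b hb => by simpa using admissible_union ha hb) h

theorem admissible_meetFinset (G : SimpleGraph (Fin n)) (J₀ U V : Finset (Fin n)) :
    Admissible G J₀ (meetFinset G J₀ U V) := by
  classical
  exact admissible_sup (fun W hW => (Finset.mem_filter.mp hW).2)

theorem meetFinset_subset_left (G : SimpleGraph (Fin n)) (J₀ U V : Finset (Fin n)) :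
    meetFinset G J₀ U V ≤ U := by
  classical
  unfold meetFinset
  refine Finset.sup_le (fun W hW => ?_)
  have := Finset.mem_powerset.mp (Finset.mem_filter.mp hW).1
  exact fun x hx => (Finset.mem_inter.mp (this hx)).1

theorem meetFinset_subset_right (G : SimpleGraph (Fin n)) (J₀ U V : Finset (Fin n)) :
    meetFinset G J₀ U V ≤ V := by
  classical
  unfold meetFinset
  refine Finset.sup_le (fun W hW => ?_)
  have := Finset.mem_powerset.mp (Finset.mem_filter.mp hW).1
  exact fun x hx => (Finset.mem_inter.mp (this hx)).2

theorem subset_meetFinset {G : SimpleGraph (Fin n)} {J₀ U V W : Finset (Fin n)}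
    (hW : Admissible G J₀ W) (h1 : W ⊆ U) (h2 : W ⊆ V) : W ≤ meetFinset G J₀ U V := by
  classical
  unfold meetFinset
  exact Finset.le_sup (f := id)
    (Finset.mem_filter.mpr ⟨Finset.mem_powerset.mpr (Finset.subset_inter h1 h2), hW⟩)

noncomputable instance : Lattice (CrossSection G J₀) :=
  { (inferInstance : PartialOrder (CrossSection G J₀)) with
    sup := fun U V => ⟨U.1 ∪ V.1, admissible_union U.2 V.2⟩
    le_sup_left := fun U V => show U.1 ⊆ U.1 ∪ V.1 from Finset.subset_union_left
    le_sup_right := fun U V => show V.1 ⊆ U.1 ∪ V.1 from Finset.subset_union_right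
    sup_le := fun U V W h1 h2 => show U.1 ∪ V.1 ⊆ W.1 from Finset.union_subset h1 h2
    inf := fun U V => ⟨meetFinset G J₀ U.1 V.1, admissible_meetFinset G J₀ U.1 V.1⟩
    inf_le_left := fun U V => meetFinset_subset_left G J₀ U.1 V.1
    inf_le_right := fun U V => meetFinset_subset_right G J₀ U.1 V.1
    le_inf := fun W U V h1 h2 => subset_meetFinset W.2 h1 h2 }

instance : OrderBot (CrossSection G J₀) where
  bot := ⟨∅, admissible_empty G J₀⟩
  bot_le := fun U => show (∅ : Finset (Fin n)) ⊆ U.1 from Finset.empty_subset _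

@[simp] theorem sup_val (U V : CrossSection G J₀) : (U ⊔ V).1 = U.1 ∪ V.1 := rfl

@[simp] theorem inf_val (U V : CrossSection G J₀) : (U ⊓ V).1 = meetFinset G J₀ U.1 V.1 := rfl

end CrossSection

section Aux

variable {m : ℕ}

theorem aux_cycle_adj_cases [NeZero m] (hm : 3 ≤ m) {u v : Fin m}
    (h : (cycleGraph m).Adj u v) :
    (pathGraph m).Adj u v ∨ (u = 0 ∧ v = -1) ∨ (u = -1 ∧ v = 0) := by
  rw [cycleGraph_adj'] at h
  have h1 : (1 : Fin m).val = 1 := by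
    have : (1 : ℕ) % m = 1 := Nat.mod_eq_of_lt (by omega)
    simpa [Fin.val_one'] using this
  rw [pathGraph_adj]
  rcases h with h | h
  · have huv : u = 1 + v := by
      rw [← sub_eq_iff_eq_add]
      exact Fin.ext (by rw [h1]; exact h)
    have hval : u.val = ((1 : Fin m).val + v.val) % m := by rw [huv, Fin.val_add]
    rw [h1] at hval
    by_cases hc : v.val + 1 < m
    · left; right
      rw [Nat.mod_eq_of_lt (by omega)] at hval
      omega
    · have hvm : 1 + v.val = m := by have := v.isLt; omega
      have hu0 : u = 0 := Fin.ext (by rw [hval, hvm, Nat.mod_self, Fin.val_zero])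
      have hv : v = u - 1 := by rw [eq_sub_iff_add_eq, add_comm]; exact huv.symm
      right; left
      exact ⟨hu0, by rw [hv, hu0, zero_sub]⟩
  · have huv : v = 1 + u := by
      rw [← sub_eq_iff_eq_add]
      exact Fin.ext (by rw [h1]; exact h)
    have hval : v.val = ((1 : Fin m).val + u.val) % m := by rw [huv, Fin.val_add]
    rw [h1] at hval
    by_cases hc : u.val + 1 < m
    · left; left
      rw [Nat.mod_eq_of_lt (by omega)] at hval
      omega
    · have hum : 1 + u.val = m := by have := u.isLt; omega
      have hv0 : v = 0 := Fin.ext (by rw [hval, hum, Nat.mod_self, Fin.val_zero])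
      have hu : u = v - 1 := by rw [eq_sub_iff_add_eq, add_comm]; exact huv.symm
      right; right
      exact ⟨by rw [hu, hv0, zero_sub], hv0⟩

theorem aux_reach_cases [NeZero m] (hm : 3 ≤ m) {U : Finset (Fin m)} {x y : Fin m}
    (h : ReachIn (cycleGraph m) U x y) :
    ReachIn (pathGraph m) U x y ∨ ReachIn (pathGraph m) U x 0 ∨
      ReachIn (pathGraph m) U x (-1) := by
  induction h with
  | refl => exact Or.inl Relation.ReflTransGen.refl
  | @tail p q hr step ih =>
    rcases ih with ih | ih | ih
    · rcases aux_cycle_adj_cases hm step.1 with hadj | ⟨hp, hq⟩ | ⟨hp, hq⟩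
      · exact Or.inl (ih.tail ⟨hadj, step.2⟩)
      · exact Or.inr (Or.inl (hp ▸ ih))
      · exact Or.inr (Or.inr (hp ▸ ih))
    · exact Or.inr (Or.inl ih)
    · exact Or.inr (Or.inr ih)

theorem aux_reach_shift [NeZero m] {U : Finset (Fin m)} (c : Fin m) {x y : Fin m}
    (h : ReachIn (cycleGraph m) U x y) :
    ReachIn (cycleGraph m) (U.image (· + c)) (x + c) (y + c) := by
  refine Relation.ReflTransGen.lift (· + c) (fun a b hab => ?_) _ _ h
  refine ⟨?_, Finset.mem_image_of_mem _ hab.2.1, Finset.mem_image_of_mem _ hab.2.2⟩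
  have := hab.1
  rw [cycleGraph_adj'] at this ⊢
  simpa [add_sub_add_right_eq_sub] using this

theorem aux_admissible_shift [NeZero m] (c : Fin m) {J U : Finset (Fin m)}
    (h : Admissible (cycleGraph m) J U) :
    Admissible (cycleGraph m) (J.image (· + c)) (U.image (· + c)) := by
  intro a' ha'
  obtain ⟨a, ha, rfl⟩ := Finset.mem_image.mp ha'
  obtain ⟨b, hb, hbJ⟩ := h a ha
  refine ⟨b + c, aux_reach_shift c hb, fun hmem => ?_⟩
  obtain ⟨j, hj, hj'⟩ := Finset.mem_image.mp hmem
  exact hbJ (add_right_cancel hj' ▸ hj)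

theorem aux_admissible_of_path {J U : Finset (Fin m)}
    (h : Admissible (pathGraph m) J U) : Admissible (cycleGraph m) J U := by
  intro a ha
  obtain ⟨b, hb, hbJ⟩ := h a ha
  exact ⟨b, Relation.ReflTransGen.mono
    (fun x y hxy => ⟨pathGraph_le_cycleGraph hxy.1, hxy.2⟩) _ _ hb, hbJ⟩

theorem aux_admissible_to_path [NeZero m] (hm : 3 ≤ m) {J U : Finset (Fin m)}
    (h0 : (0 : Fin m) ∉ J) (h1 : (-1 : Fin m) ∉ J)
    (h : Admissible (cycleGraph m) J U) : Admissible (pathGraph m) J U := by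
  intro a ha
  obtain ⟨b, hb, hbJ⟩ := h a ha
  rcases aux_reach_cases hm hb with hr | hr | hr
  · exact ⟨b, hr, hbJ⟩
  · exact ⟨0, hr, h0⟩
  · exact ⟨-1, hr, h1⟩

theorem aux_image_add_cancel [NeZero m] (U : Finset (Fin m)) (t : Fin m) :
    (U.image (· + t)).image (· + (-t)) = U := by
  rw [Finset.image_image]
  ext x
  simp

end Aux

theorem stmt_18 (m : ℕ) (hm : 3 ≤ m) (J₀ : Finset (Fin m))
    (h : ∃ a b : Fin m, (cycleGraph m).Adj a b ∧ a ∉ J₀ ∧ b ∉ J₀) :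
    ∃ J₀' : Finset (Fin m),
      Nonempty (CrossSection (cycleGraph m) J₀ ≃o CrossSection (pathGraph m) J₀') := by
  haveI : NeZero m := ⟨by omega⟩
  have h1 : (1 : Fin m).val = 1 := by
    have : (1 : ℕ) % m = 1 := Nat.mod_eq_of_lt (by omega)
    simpa [Fin.val_one'] using this
  -- find a with a ∉ J₀ and a + 1 ∉ J₀
  obtain ⟨a, ha, ha1⟩ : ∃ a : Fin m, a ∉ J₀ ∧ a + 1 ∉ J₀ := by
    obtain ⟨a, b, hadj, ha, hb⟩ := h
    rw [cycleGraph_adj'] at hadj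
    rcases hadj with h' | h'
    · have : a = b + 1 := by
        rw [add_comm, ← sub_eq_iff_eq_add]
        exact Fin.ext (by rw [h1]; exact h')
      exact ⟨b, hb, this ▸ ha⟩
    · have : b = a + 1 := by
        rw [add_comm, ← sub_eq_iff_eq_add]
        exact Fin.ext (by rw [h1]; exact h')
      exact ⟨a, ha, this ▸ hb⟩
  set t : Fin m := -(a + 1) with ht
  have h0J : (0 : Fin m) ∉ J₀.image (· + t) := by
    intro hmem
    obtain ⟨j, hj, hj'⟩ := Finset.mem_image.mp hmem
    apply ha1
    have : j = a + 1 := by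
      have := hj'
      rw [ht] at this
      have : j = a + 1 := by
        have h2 : j + -(a + 1) = 0 := this
        have := eq_neg_of_add_eq_zero_left h2
        simpa using this
      exact this
    exact this ▸ hj
  have hm1J : (-1 : Fin m) ∉ J₀.image (· + t) := by
    intro hmem
    obtain ⟨j, hj, hj'⟩ := Finset.mem_image.mp hmem
    apply ha
    have : j = a := by
      have h2 : j + -(a + 1) = -1 := hj'
      have : j = -1 - (-(a + 1)) := by
        rw [eq_sub_iff_add_eq]; exact h2
      rw [this]; abel
    exact this ▸ hj
  have fwd : ∀ U : Finset (Fin m), Admissible (cycleGraph m) J₀ U →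
      Admissible (pathGraph m) (J₀.image (· + t)) (U.image (· + t)) := by
    intro U hU
    exact aux_admissible_to_path hm h0J hm1J (aux_admissible_shift t hU)
  have bwd : ∀ V : Finset (Fin m), Admissible (pathGraph m) (J₀.image (· + t)) V →
      Admissible (cycleGraph m) J₀ (V.image (· + (-t))) := by
    intro V hV
    have := aux_admissible_shift (-t) (aux_admissible_of_path hV)
    rwa [aux_image_add_cancel J₀ t] at this
  have hinj : Function.Injective (fun x : Fin m => x + t) := fun x y hxy => by
    simpa using add_right_cancel hxy
  have hinj' : Function.Injective (fun x : Fin m => x + (-t)) := fun x y hxy => by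
    simpa using add_right_cancel hxy
  refine ⟨J₀.image (· + t), ⟨{
    toFun := fun U => ⟨U.1.image (· + t), fwd U.1 U.2⟩
    invFun := fun V => ⟨V.1.image (· + (-t)), bwd V.1 V.2⟩
    left_inv := fun U => Subtype.ext (aux_image_add_cancel U.1 t)
    right_inv := fun V => Subtype.ext (by
      have := aux_image_add_cancel V.1 (-t)
      simpa using this)
    map_rel_iff' := fun {U V} => by
      constructor
      · intro hle
        exact fun x hx => by
          have : x + t ∈ V.1.image (· + t) :=
            hle (Finset.mem_image_of_mem _ hx)
          obtain ⟨y, hy, hy'⟩ := Finset.mem_image.mp this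
          exact (hinj hy') ▸ hy
      · intro hle
        exact Finset.image_subset_image hle }⟩⟩
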